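/- Let ε > 0, Δ > 0, and set b = Δ/ε. Let k be a natural number. For a ∈ ℝ^k, let μ_a denote the product measure on ℝ^k whose i-th factor is the measure on ℝ with density x ↦ (1/(2b))·exp(−|x − a_i|/b) with respect to Lebesgue measure. Then for all a, a' ∈ ℝ^k with ∑_{i=1}^{k} |a_i − a'_i| ≤ Δ and every measurable set Ω ⊆ ℝ^k, one has μ_a(Ω) ≤ exp(ε)·μ_{a'}(Ω). -/

import Mathlib

open MeasureTheory Real

/-- The product measure on `ℝ^k` whose `i`-th factor is the Laplace measure with
scale `b` centered at `a i`. -/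
noncomputable def laplaceMechanism (k : ℕ) (b : ℝ) (a : Fin k → ℝ) : Measure (Fin k → ℝ) :=
  Measure.pi (fun i =>
    volume.withDensity (fun x => ENNReal.ofReal ((1 / (2 * b)) * Real.exp (-|x - a i| / b))))

/-- Tonelli for a product of single-coordinate functions on `Fin n → ℝ`. -/
lemma lintegral_pi_prod {n : ℕ} (μ : Fin n → Measure ℝ) [∀ i, SigmaFinite (μ i)]
    (f : Fin n → ℝ → ENNReal) (hf : ∀ i, Measurable (f i)) :
    ∫⁻ x : Fin n → ℝ, ∏ i, f i (x i) ∂Measure.pi μ = ∏ i, ∫⁻ x, f i x ∂μ i := by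
  induction n with
  | zero =>
      simp [Measure.pi_of_empty]
  | succ n ih =>
      have hmp := measurePreserving_piFinSuccAbove μ 0
      set e := MeasurableEquiv.piFinSuccAbove (fun _ : Fin (n + 1) => ℝ) 0
      have hG : Measurable fun p : ℝ × (Fin n → ℝ) =>
          f 0 p.1 * ∏ j, f (Fin.succ j) (p.2 j) := by
        refine ((hf 0).comp measurable_fst).mul ?_
        exact Finset.measurable_prod _ fun j _ =>
          (hf _).comp ((measurable_pi_apply j).comp measurable_snd)
      have key : ∫⁻ x : Fin (n + 1) → ℝ, ∏ i, f i (x i) ∂Measure.pi μ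
          = ∫⁻ p : ℝ × (Fin n → ℝ), f 0 p.1 * ∏ j, f (Fin.succ j) (p.2 j)
              ∂(μ 0).prod (Measure.pi fun j => μ ((0 : Fin (n + 1)).succAbove j)) := by
        rw [← hmp.lintegral_comp hG]
        refine lintegral_congr fun x => ?_
        have : ∏ i, f i (x i) = f 0 (x 0) * ∏ j : Fin n, f (Fin.succ j) (x (Fin.succ j)) :=
          Fin.prod_univ_succ _
        simp [this, e, MeasurableEquiv.piFinSuccAbove_apply, Fin.removeNth,
          Fin.tail, Fin.zero_succAbove]
      have h2 : AEMeasurable (fun y : Fin n → ℝ => ∏ j, f (Fin.succ j) (y j))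
          (Measure.pi fun j => μ ((0 : Fin (n + 1)).succAbove j)) :=
        (Finset.measurable_prod Finset.univ fun j _ =>
          (hf _).comp (measurable_pi_apply j)).aemeasurable
      rw [key, lintegral_prod_mul (hf 0).aemeasurable h2,
        ih (fun j => μ ((0 : Fin (n + 1)).succAbove j)) (fun j => f (Fin.succ j))
          (fun j => hf _), Fin.prod_univ_succ]
      simp [Fin.zero_succAbove]

/-- A finite product of measures with densities is the product measure with the
product density. -/
lemma pi_withDensity {k : ℕ} (μ : Fin k → Measure ℝ) [∀ i, SigmaFinite (μ i)]
    (f : Fin k → ℝ → ENNReal) (hf : ∀ i, Measurable (f i))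
    [∀ i, SigmaFinite ((μ i).withDensity (f i))] :
    Measure.pi (fun i => (μ i).withDensity (f i))
      = (Measure.pi μ).withDensity (fun x => ∏ i, f i (x i)) := by
  refine (Measure.pi_eq (μ := fun i => (μ i).withDensity (f i))
    (μ' := (Measure.pi μ).withDensity fun x => ∏ i, f i (x i)) fun s hs => ?_)
  rw [withDensity_apply _ (MeasurableSet.univ_pi hs)]
  have hind : ∀ x : Fin k → ℝ,
      (Set.univ.pi s).indicator (fun x => ∏ i, f i (x i)) x
        = ∏ i, (s i).indicator (f i) (x i) := by
    intro x
    by_cases hx : x ∈ Set.univ.pi s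
    · rw [Set.indicator_of_mem hx]
      exact Finset.prod_congr rfl fun i _ =>
        (Set.indicator_of_mem (hx i (Set.mem_univ i)) _).symm
    · rw [Set.indicator_of_notMem hx]
      have hex : ∃ i, x i ∉ s i := by
        by_contra h
        push_neg at h
        exact hx fun i _ => h i
      obtain ⟨i, hi⟩ := hex
      exact (Finset.prod_eq_zero (Finset.mem_univ i)
        (Set.indicator_of_notMem hi _)).symm
  calc ∫⁻ x in Set.univ.pi s, ∏ i, f i (x i) ∂Measure.pi μ
      = ∫⁻ x, ∏ i, (s i).indicator (f i) (x i) ∂Measure.pi μ := by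
        rw [← lintegral_indicator (MeasurableSet.univ_pi hs)]
        exact lintegral_congr hind
    _ = ∏ i, ∫⁻ x, (s i).indicator (f i) x ∂μ i :=
        lintegral_pi_prod μ _ fun i => (hf i).indicator (hs i)
    _ = ∏ i, ((μ i).withDensity (f i)) (s i) := by
        refine Finset.prod_congr rfl fun i _ => ?_
        rw [lintegral_indicator (hs i), withDensity_apply _ (hs i)]

theorem laplace_mechanism_dp (ε Δ : ℝ) (hε : 0 < ε) (hΔ : 0 < Δ) (b : ℝ) (hb : b = Δ / ε)
    (k : ℕ) (a a' : Fin k → ℝ) (hsens : ∑ i : Fin k, |a i - a' i| ≤ Δ)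
    (Ω : Set (Fin k → ℝ)) (hΩ : MeasurableSet Ω) :
    laplaceMechanism k b a Ω ≤ ENNReal.ofReal (Real.exp ε) * laplaceMechanism k b a' Ω := by
  have hbpos : 0 < b := hb ▸ div_pos hΔ hε
  set g : (Fin k → ℝ) → ℝ → ℝ → ENNReal := fun c x y =>
    ENNReal.ofReal ((1 / (2 * b)) * Real.exp (-|y - x| / b)) with hg
  have hmeas : ∀ (c : Fin k → ℝ) (i : Fin k),
      Measurable fun y : ℝ => ENNReal.ofReal ((1 / (2 * b)) * Real.exp (-|y - c i| / b)) := by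
    intro c i
    exact (measurable_const.mul (((measurable_id.sub measurable_const).abs.neg.div_const
      b).exp)).ennreal_ofReal
  have hpi : ∀ c : Fin k → ℝ, laplaceMechanism k b c
      = (Measure.pi fun _ => (volume : Measure ℝ)).withDensity
          (fun x => ∏ i, ENNReal.ofReal ((1 / (2 * b)) * Real.exp (-|x i - c i| / b))) := by
    intro c
    exact pi_withDensity (fun _ => volume) _ (hmeas c)
  rw [hpi a, hpi a', withDensity_apply _ hΩ, withDensity_apply _ hΩ]
  have hpt : ∀ x : Fin k → ℝ,
      (∏ i, ENNReal.ofReal ((1 / (2 * b)) * Real.exp (-|x i - a i| / b)))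
        ≤ ENNReal.ofReal (Real.exp ε)
          * ∏ i, ENNReal.ofReal ((1 / (2 * b)) * Real.exp (-|x i - a' i| / b)) := by
    intro x
    rw [← ENNReal.ofReal_prod_of_nonneg, ← ENNReal.ofReal_prod_of_nonneg,
      ← ENNReal.ofReal_mul (Real.exp_nonneg ε)]
    · apply ENNReal.ofReal_le_ofReal
      have hfac : ∀ (c : Fin k → ℝ),
          (∏ i, (1 / (2 * b)) * Real.exp (-|x i - c i| / b))
            = (1 / (2 * b)) ^ k * Real.exp (∑ i, -|x i - c i| / b) := by
        intro c
        rw [Finset.prod_mul_distrib, Finset.prod_const, Real.exp_sum]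
        simp [Finset.card_univ]
      rw [hfac, hfac, mul_comm (Real.exp ε), mul_assoc, ← Real.exp_add]
      have hkpos : (0 : ℝ) ≤ (1 / (2 * b)) ^ k := by positivity
      refine mul_le_mul_of_nonneg_left (Real.exp_le_exp.mpr ?_) hkpos
      have hsum : ∑ i, -|x i - a i| / b ≤ (∑ i, -|x i - a' i| / b) + Δ / b := by
        rw [← Finset.sum_div, ← Finset.sum_div, ← add_div, div_le_div_iff_of_pos_right hbpos]
        calc ∑ i, -|x i - a i| ≤ ∑ i, (-|x i - a' i| + |a i - a' i|) := by
              refine Finset.sum_le_sum fun i _ => ?_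
              have := abs_sub_abs_le_abs_sub (x i - a' i) (x i - a i)
              have h2 : x i - a' i - (x i - a i) = a i - a' i := by ring
              rw [h2] at this
              linarith
          _ = (∑ i, -|x i - a' i|) + ∑ i, |a i - a' i| := Finset.sum_add_distrib
          _ ≤ (∑ i, -|x i - a' i|) + Δ := by linarith
      have hDb : Δ / b = ε := by
        rw [hb]; field_simp
      linarith [hsum, hDb]
    · intro i _; positivity
    · intro i _; positivity
  calc ∫⁻ x in Ω, ∏ i, ENNReal.ofReal ((1 / (2 * b)) * Real.exp (-|x i - a i| / b))
        ∂(Measure.pi fun _ => (volume : Measure ℝ))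
      ≤ ∫⁻ x in Ω, ENNReal.ofReal (Real.exp ε)
          * ∏ i, ENNReal.ofReal ((1 / (2 * b)) * Real.exp (-|x i - a' i| / b))
        ∂(Measure.pi fun _ => (volume : Measure ℝ)) :=
        lintegral_mono fun x => hpt x
    _ = ENNReal.ofReal (Real.exp ε)
          * ∫⁻ x in Ω, ∏ i, ENNReal.ofReal ((1 / (2 * b)) * Real.exp (-|x i - a' i| / b))
        ∂(Measure.pi fun _ => (volume : Measure ℝ)) :=
        lintegral_const_mul' _ _ ENNReal.ofReal_ne_top
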